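/- Let g, ĝ : [a,b] → ℝ be C¹ with derivatives Lipschitz of constants M_g, M_ĝ, and let a = t_0 < t_1 < ... < t_N = b be a uniform grid of spacing h on which both values and derivatives of g and ĝ agree. Then sup_{t∈[a,b]} |ĝ(t) − g(t)| ≤ (M_g + M_ĝ)h²/8. -/

import Mathlib

/-- Taylor-type bound: C¹ function with Lipschitz derivative, vanishing value and
derivative at `x`, is bounded by `M/2 * (t-x)^2`. -/
lemma key_taylor_bound (f : ℝ → ℝ) (hf : ContDiff ℝ 1 f) (M x : ℝ)
    (hlip : ∀ s : ℝ, |deriv f s - deriv f x| ≤ M * |s - x|)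
    (hfx : f x = 0) (hdx : deriv f x = 0) (t : ℝ) :
    |f t| ≤ M / 2 * (t - x) ^ 2 := by
  have hdiff : Differentiable ℝ f := hf.differentiable one_ne_zero
  have hcont : Continuous (deriv f) := (hf.iterate_deriv' 0 1).continuous
  have hbound : ∀ s : ℝ, |deriv f s| ≤ M * |s - x| := by
    intro s
    have := hlip s
    simpa [hdx] using this
  have hM : 0 ≤ M := by
    have h1 := hlip (x + 1)
    have h2 : |x + 1 - x| = 1 := by norm_num
    rw [h2, mul_one] at h1
    exact le_trans (abs_nonneg _) h1
  have hFTC : ∀ u v : ℝ, f v - f u = ∫ s in u..v, deriv f s :=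
    fun u v => (intervalIntegral.integral_deriv_eq_sub (fun s _ => hdiff s)
      (hcont.intervalIntegrable u v)).symm
  have hft : f t = ∫ s in x..t, deriv f s := by
    have := hFTC x t; simpa [hfx] using this
  rcases le_total x t with hxt | htx
  · have h1 : |f t| ≤ ∫ s in x..t, |deriv f s| := by
      rw [hft]
      exact (intervalIntegral.abs_integral_le_integral_abs hxt)
    have h2 : (∫ s in x..t, |deriv f s|) ≤ ∫ s in x..t, M * (s - x) := by
      apply intervalIntegral.integral_mono_on hxt
      · exact (hcont.abs.intervalIntegrable x t)
      · exact ((continuous_const.mul (continuous_id.sub continuous_const)).intervalIntegrable x t)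
      · intro s hs
        have : |s - x| = s - x := abs_of_nonneg (by linarith [hs.1])
        calc |deriv f s| ≤ M * |s - x| := hbound s
          _ = M * (s - x) := by rw [this]
    have h3 : (∫ s in x..t, M * (s - x)) = M / 2 * (t - x) ^ 2 := by
      rw [intervalIntegral.integral_const_mul]
      have : (∫ s in x..t, (s - x)) = (t - x)^2 / 2 := by
        rw [intervalIntegral.integral_comp_sub_right (fun s => s) x, integral_id]
        ring
      rw [this]; ring
    linarith
  · have h1 : |f t| ≤ ∫ s in t..x, |deriv f s| := by
      have : f t = -∫ s in t..x, deriv f s := by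
        rw [hft, intervalIntegral.integral_symm]
      rw [this, abs_neg]
      exact (intervalIntegral.abs_integral_le_integral_abs htx)
    have h2 : (∫ s in t..x, |deriv f s|) ≤ ∫ s in t..x, M * (x - s) := by
      apply intervalIntegral.integral_mono_on htx
      · exact (hcont.abs.intervalIntegrable t x)
      · exact ((continuous_const.mul (continuous_const.sub continuous_id)).intervalIntegrable t x)
      · intro s hs
        have : |s - x| = x - s := by
          rw [abs_sub_comm]; exact abs_of_nonneg (by linarith [hs.2])
        calc |deriv f s| ≤ M * |s - x| := hbound s
          _ = M * (x - s) := by rw [this]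
    have h3 : (∫ s in t..x, M * (x - s)) = M / 2 * (t - x) ^ 2 := by
      rw [intervalIntegral.integral_const_mul]
      have : (∫ s in t..x, (x - s)) = (x - t)^2 / 2 := by
        have e1 : (∫ s in t..x, (x - s)) = ∫ s in t..x, (x - s) := rfl
        have : (fun s : ℝ => x - s) = fun s => -(s - x) := by funext s; ring
        rw [this, intervalIntegral.integral_neg,
          intervalIntegral.integral_comp_sub_right (fun s => s) x, integral_id]
        ring
      rw [this]; ring
    linarith

/-- One-dimensional Sobolev guarantee on a uniform grid: matching values and derivatives
at grid points spaced h apart yields uniform error (M_g + M_ĝ)h²/8 on [a,b]. -/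
theorem sobolev_uniform_grid (a b : ℝ) (hab : a < b) (N : ℕ) (hN : 0 < N)
    (h : ℝ) (hh : h = (b - a) / N)
    (g ghat : ℝ → ℝ) (hg : ContDiff ℝ 1 g) (hghat : ContDiff ℝ 1 ghat)
    (Mg Mghat : ℝ)
    (hMg : ∀ x y : ℝ, |deriv g x - deriv g y| ≤ Mg * |x - y|)
    (hMghat : ∀ x y : ℝ, |deriv ghat x - deriv ghat y| ≤ Mghat * |x - y|)
    (hval : ∀ i : ℕ, i ≤ N → ghat (a + i * h) = g (a + i * h))
    (hder : ∀ i : ℕ, i ≤ N → deriv ghat (a + i * h) = deriv g (a + i * h)) :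
    ∀ t ∈ Set.Icc a b, |ghat t - g t| ≤ (Mg + Mghat) * h ^ 2 / 8 := by
  intro t ht
  have hN' : (0:ℝ) < N := Nat.cast_pos.mpr hN
  have hhpos : 0 < h := by
    have hba : (0:ℝ) < b - a := by linarith
    rw [hh]; exact div_pos hba hN'
  -- nearest grid point
  set u : ℝ := (t - a) / h with hu
  have hu0 : 0 ≤ u := by
    apply div_nonneg (by linarith [ht.1]) hhpos.le
  have huN : u ≤ N := by
    rw [hu, div_le_iff₀ hhpos]
    have : (N:ℝ) * h = b - a := by rw [hh]; field_simp
    linarith [ht.2]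
  set i : ℕ := ⌊u + 1/2⌋₊ with hi
  have hiN : i ≤ N := by
    have h2 : u + 1/2 < (N:ℝ) + 1 := by linarith
    have h3 : ⌊u + 1/2⌋₊ < N + 1 := by
      apply (Nat.floor_lt (by linarith : (0:ℝ) ≤ u + 1/2)).mpr
      push_cast; linarith
    omega
  have hile : (i:ℝ) ≤ u + 1/2 := Nat.floor_le (by linarith)
  have hilt : u - 1/2 < (i:ℝ) := by
    have := Nat.lt_floor_add_one (u + 1/2)
    linarith
  set x : ℝ := a + i * h with hx
  have htx : |t - x| ≤ h / 2 := by
    have : t - x = h * (u - i) := by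
      rw [hx, hu]; field_simp; ring
    rw [this, abs_mul, abs_of_pos hhpos]
    have : |u - (i:ℝ)| ≤ 1/2 := abs_le.mpr ⟨by linarith, by linarith⟩
    nlinarith
  -- error function
  set e : ℝ → ℝ := fun s => ghat s - g s with he
  have hdg : Differentiable ℝ g := hg.differentiable one_ne_zero
  have hdgh : Differentiable ℝ ghat := hghat.differentiable one_ne_zero
  have hde : ∀ s, deriv e s = deriv ghat s - deriv g s := fun s =>
    deriv_fun_sub (hdgh s) (hdg s)
  have hec : ContDiff ℝ 1 e := hghat.sub hg
  have hlipe : ∀ s : ℝ, |deriv e s - deriv e x| ≤ (Mg + Mghat) * |s - x| := by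
    intro s
    rw [hde s, hde x]
    calc |(deriv ghat s - deriv g s) - (deriv ghat x - deriv g x)|
        = |(deriv ghat s - deriv ghat x) - (deriv g s - deriv g x)| := by ring_nf
      _ ≤ |deriv ghat s - deriv ghat x| + |deriv g s - deriv g x| := abs_sub _ _
      _ ≤ Mghat * |s - x| + Mg * |s - x| := add_le_add (hMghat s x) (hMg s x)
      _ = (Mg + Mghat) * |s - x| := by ring
  have hex : e x = 0 := by rw [he]; simp [hx, hval i hiN]
  have hdex : deriv e x = 0 := by rw [hde]; simp [hx, hder i hiN]
  have hbd := key_taylor_bound e hec (Mg + Mghat) x hlipe hex hdex t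
  have hM : 0 ≤ Mg + Mghat := by
    have h1 := hMg 0 1
    have h2 := hMghat 0 1
    rw [show |(0:ℝ) - 1| = 1 by norm_num, mul_one] at h1 h2
    linarith [abs_nonneg (deriv g 0 - deriv g 1),
      abs_nonneg (deriv ghat 0 - deriv ghat 1)]
  have hsq : (t - x)^2 ≤ (h/2)^2 := by
    rw [← sq_abs (t - x)]
    exact pow_le_pow_left₀ (abs_nonneg _) htx 2
  calc |ghat t - g t| = |e t| := rfl
    _ ≤ (Mg + Mghat) / 2 * (t - x)^2 := hbd
    _ ≤ (Mg + Mghat) / 2 * (h/2)^2 := by nlinarith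
    _ = (Mg + Mghat) * h ^ 2 / 8 := by ring
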